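/- Fix real constants k_B > 0, T > 0, V₀ > 0, a natural number N ≥ 1, and 0 < q < 1. Then for every V > 0, the Tsallis PDM ideal gas pressure P_q(V) = N k_B T (1−q) / ( V₀ (1 + (1−q)V/V₀) ln(1 + (1−q)V/V₀) ) is strictly less than the standard ideal gas pressure P(V) = N k_B T / V. Equivalently, u < (1+u)·ln(1+u) for every u > 0. -/

import Mathlib

lemma key (u : ℝ) (hu : 0 < u) : u < (1 + u) * Real.log (1 + u) := by
  have h1 : (0:ℝ) < 1 + u := by linarith
  have h2 : Real.log (1/(1+u)) < 1/(1+u) - 1 := by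
    apply Real.log_lt_sub_one_of_pos (by positivity)
    intro h
    have : 1 + u = 1 := by
      field_simp at h
      linarith
    linarith
  rw [Real.log_div one_ne_zero (by linarith), Real.log_one] at h2
  have h3 : u / (1+u) < Real.log (1+u) := by
    have : 1/(1+u) - 1 = -(u/(1+u)) := by field_simp; ring
    rw [this] at h2
    linarith
  calc u = (1+u) * (u/(1+u)) := by field_simp
    _ < (1+u) * Real.log (1+u) := by
        exact mul_lt_mul_of_pos_left h3 h1

theorem stmt_10 (kB T V₀ q : ℝ) (N : ℕ)
    (hkB : 0 < kB) (hT : 0 < T) (hV₀ : 0 < V₀)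
    (hN : 1 ≤ N) (hq0 : 0 < q) (hq1 : q < 1) :
    (∀ V : ℝ, 0 < V →
      (N : ℝ) * kB * T * (1 - q) /
          (V₀ * (1 + (1 - q) * V / V₀) * Real.log (1 + (1 - q) * V / V₀))
        < (N : ℝ) * kB * T / V) ∧
    (∀ u : ℝ, 0 < u → u < (1 + u) * Real.log (1 + u)) := by
  constructor
  · intro V hV
    set u := (1 - q) * V / V₀ with hu_def
    have hs : (0:ℝ) < 1 - q := by linarith
    have hu : 0 < u := div_pos (mul_pos hs hV) hV₀
    have h1u : (0:ℝ) < 1 + u := by linarith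
    have hlog : 0 < Real.log (1 + u) := Real.log_pos (by linarith)
    have hN' : (0:ℝ) < (N:ℝ) := by exact_mod_cast Nat.lt_of_lt_of_le Nat.zero_lt_one hN
    have hc : 0 < (N:ℝ) * kB * T := by positivity
    rw [div_lt_div_iff₀ (by positivity) hV]
    have hkey := key u hu
    have huv : u * V₀ = (1 - q) * V := by
      rw [hu_def]; field_simp
    nlinarith [mul_lt_mul_of_pos_left hkey hc, mul_pos hc hV, mul_pos h1u hlog]
  · exact key
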